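/- Let M be an r×r matrix with complex entries, let t be a positive integer, and fix 2t indices b₁, …, b_{2t} ∈ {1, …, r}. For a non-negative integer k define f(k) = Σ (M^{k₁})_{b₁,b₂} (M^{k₂})_{b₃,b₄} ··· (M^{k_t})_{b_{2t−1},b_{2t}}, summed over all t-tuples of non-negative integers (k₁, …, k_t) with k₁ + ··· + k_t = k. Then there exist an integer K ≥ 0 and, for each eigenvalue ν of M, a polynomial p_ν with complex coefficients, such that f(k) = Σ_{ν ∈ Spec(M)} ν^k p_ν(k) for all k ≥ K. Moreover, if M is diagonalizable, then the polynomials p_ν can be taken of degree at most t. -/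

import Mathlib

open scoped Classical

/-- `walkSum M t b k = Σ_{k₁+···+k_t = k} (M^{k₁})_{b₁,b₂} ··· (M^{k_t})_{b_{2t−1},b_{2t}}`,
where the pair `b i` records the indices `(b_{2i−1}, b_{2i})`. -/
noncomputable def walkSum {r : ℕ} (M : Matrix (Fin r) (Fin r) ℂ) (t : ℕ)
    (b : Fin t → Fin r × Fin r) (k : ℕ) : ℂ :=
  ∑ v ∈ Finset.Nat.antidiagonalTuple t k, ∏ i, (M ^ v i) (b i).1 (b i).2

/-- `M` is diagonalizable: `M = P D P⁻¹` with `P` invertible and `D` diagonal. -/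
def Matrix.Diagonalizable {r : ℕ} (M : Matrix (Fin r) (Fin r) ℂ) : Prop :=
  ∃ P D : Matrix (Fin r) (Fin r) ℂ, IsUnit P.det ∧ D.IsDiag ∧ M = P * D * P⁻¹

namespace MatrixEntrySumAux

open Polynomial

/-! ### Polynomial difference-equation solving -/

lemma solve_geom_aux (c : ℂ) (hc : c ≠ 1) :
    ∀ n (p : Polynomial ℂ), p.natDegree ≤ n →
      ∃ R : Polynomial ℂ, R.natDegree ≤ n ∧ C c * R.comp (X + 1) - R = p := by
  have hc1 : c - 1 ≠ 0 := sub_ne_zero.mpr hc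
  intro n
  induction n with
  | zero =>
    intro p hp
    refine ⟨Polynomial.C (p.coeff 0 / (c - 1)), by simp, ?_⟩
    rw [Polynomial.eq_C_of_natDegree_le_zero hp]
    simp only [C_comp]
    rw [← C_mul, ← C_sub]
    congr 1
    field_simp
    ring
    simp
  | succ n ih =>
    intro p hp
    set a := p.coeff (n + 1) with ha
    set R₀ : Polynomial ℂ := Polynomial.C (a / (c - 1)) * X ^ (n + 1) with hR₀
    have hcomp : R₀.comp (X + 1) = Polynomial.C (a / (c - 1)) * (X + 1) ^ (n + 1) := by
      simp [hR₀]
    have hX1 : ((X : ℂ[X]) + 1).natDegree = 1 := by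
      simpa using natDegree_X_add_C (1 : ℂ)
    have hd1 : ((X + 1 : ℂ[X]) ^ (n + 1)).natDegree ≤ n + 1 := by
      refine natDegree_pow_le.trans ?_
      rw [hX1]; omega
    have hR₀deg : R₀.natDegree ≤ n + 1 := by
      refine (natDegree_C_mul_le _ _).trans ?_
      simpa using natDegree_X_pow_le (R := ℂ) (n + 1)
    have hψdeg : (C c * R₀.comp (X + 1) - R₀).natDegree ≤ n + 1 := by
      refine (natDegree_sub_le _ _).trans (max_le ?_ hR₀deg)
      rw [hcomp]
      exact (natDegree_C_mul_le _ _).trans ((natDegree_C_mul_le _ _).trans hd1)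
    have hcoeff : (C c * R₀.comp (X + 1) - R₀).coeff (n + 1) = a := by
      rw [coeff_sub, hcomp, ← mul_assoc, ← C_mul, coeff_C_mul, coeff_X_add_one_pow,
        hR₀, coeff_C_mul, coeff_X_pow, if_pos rfl]
      simp [Nat.choose_self]
      field_simp
    set q : ℂ[X] := p - (C c * R₀.comp (X + 1) - R₀) with hq
    have hqdeg : q.natDegree ≤ n := by
      rw [natDegree_le_iff_coeff_eq_zero]
      intro N hN
      rcases eq_or_lt_of_le (Nat.succ_le_of_lt hN) with hN1 | hN1
      · rw [hq, coeff_sub, ← hN1, hcoeff, ← ha, sub_self]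
      · rw [hq, coeff_sub, coeff_eq_zero_of_natDegree_lt (lt_of_le_of_lt hp hN1),
          coeff_eq_zero_of_natDegree_lt (lt_of_le_of_lt hψdeg hN1), sub_self]
    obtain ⟨R₁, hR₁deg, hψ₁⟩ := ih q hqdeg
    refine ⟨R₀ + R₁, ?_, ?_⟩
    · exact (natDegree_add_le _ _).trans (max_le hR₀deg (hR₁deg.trans (Nat.le_succ n)))
    · rw [add_comp]
      linear_combination hψ₁

lemma solve_faul_aux :
    ∀ n (p : Polynomial ℂ), p.natDegree ≤ n →
      ∃ Q : Polynomial ℂ, Q.natDegree ≤ n + 1 ∧ Q.comp (X + 1) - Q = p := by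
  intro n
  induction n with
  | zero =>
    intro p hp
    refine ⟨Polynomial.C (p.coeff 0) * X, ?_, ?_⟩
    · exact (natDegree_C_mul_le _ _).trans (by simp)
    · rw [Polynomial.eq_C_of_natDegree_le_zero hp]
      simp [mul_comp]
      ring
  | succ n ih =>
    intro p hp
    set a := p.coeff (n + 1) with ha
    set Q₀ : Polynomial ℂ := Polynomial.C (a / (n + 2)) * X ^ (n + 2) with hQ₀
    have hn2 : ((n : ℂ) + 2) ≠ 0 := by
      have h2 : ((n : ℂ) + 2) = ((n + 2 : ℕ) : ℂ) := by push_cast; ring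
      rw [h2]
      exact Nat.cast_ne_zero.mpr (by omega)
    have hcomp : Q₀.comp (X + 1) = Polynomial.C (a / (n + 2)) * (X + 1) ^ (n + 2) := by
      simp [hQ₀]
    have hX1 : ((X : ℂ[X]) + 1).natDegree = 1 := by
      simpa using natDegree_X_add_C (1 : ℂ)
    have hφ : Q₀.comp (X + 1) - Q₀ = Polynomial.C (a / (n + 2)) * ((X + 1) ^ (n + 2) - X ^ (n + 2)) := by
      rw [hcomp, hQ₀]; ring
    have hφdeg : (Q₀.comp (X + 1) - Q₀).natDegree ≤ n + 1 := by
      rw [hφ]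
      refine (natDegree_C_mul_le _ _).trans ?_
      rw [natDegree_le_iff_coeff_eq_zero]
      intro N hN
      rw [coeff_sub, coeff_X_add_one_pow, coeff_X_pow]
      rcases eq_or_lt_of_le (Nat.succ_le_of_lt hN) with h1 | h1
      · rw [if_pos h1.symm, ← h1, Nat.choose_self]; simp
      · rw [if_neg (by omega), Nat.choose_eq_zero_of_lt (by omega)]; simp
    have hcoeff : (Q₀.comp (X + 1) - Q₀).coeff (n + 1) = a := by
      rw [hφ, coeff_C_mul, coeff_sub, coeff_X_add_one_pow, coeff_X_pow, if_neg (by omega)]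
      rw [Nat.choose_succ_self_right]
      push_cast
      field_simp
      ring
    set q : ℂ[X] := p - (Q₀.comp (X + 1) - Q₀) with hq
    have hqdeg : q.natDegree ≤ n := by
      rw [natDegree_le_iff_coeff_eq_zero]
      intro N hN
      rcases eq_or_lt_of_le (Nat.succ_le_of_lt hN) with h1 | h1
      · rw [hq, coeff_sub, ← h1, hcoeff, ← ha, sub_self]
      · rw [hq, coeff_sub, coeff_eq_zero_of_natDegree_lt (lt_of_le_of_lt hp h1),
          coeff_eq_zero_of_natDegree_lt (lt_of_le_of_lt hφdeg h1), sub_self]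
    obtain ⟨Q₁, hQ₁deg, hφ₁⟩ := ih q hqdeg
    refine ⟨Q₀ + Q₁, ?_, ?_⟩
    · refine (natDegree_add_le _ _).trans (max_le ?_ (hQ₁deg.trans (by omega)))
      exact (natDegree_C_mul_le _ _).trans (by simpa using natDegree_X_pow_le (R := ℂ) (n + 2))
    · rw [add_comp]
      linear_combination hφ₁

lemma geom_poly_sum (c : ℂ) (hc : c ≠ 1) (p : Polynomial ℂ) :
    ∃ (R : Polynomial ℂ) (C0 : ℂ), R.natDegree ≤ p.natDegree ∧
      ∀ k : ℕ, ∑ m ∈ Finset.range k, c ^ m * p.eval (m : ℂ) = c ^ k * R.eval (k : ℂ) + C0 := by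
  obtain ⟨R, hdeg, hψ⟩ := solve_geom_aux c hc p.natDegree p le_rfl
  refine ⟨R, -(R.eval 0), hdeg, ?_⟩
  intro k
  induction k with
  | zero => simp
  | succ k ih =>
    rw [Finset.sum_range_succ, ih]
    have h := congrArg (Polynomial.eval (k : ℂ)) hψ
    simp only [eval_sub, eval_mul, eval_C, eval_comp, eval_add, eval_one, eval_X] at h
    push_cast
    linear_combination (-(c ^ k)) * h

lemma poly_sum (p : Polynomial ℂ) :
    ∃ Q : Polynomial ℂ, Q.natDegree ≤ p.natDegree + 1 ∧
      ∀ k : ℕ, ∑ m ∈ Finset.range k, p.eval (m : ℂ) = Q.eval (k : ℂ) := by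
  obtain ⟨Q, hdeg, hφ⟩ := solve_faul_aux p.natDegree p le_rfl
  refine ⟨Q - Polynomial.C (Q.eval 0), ?_, ?_⟩
  · exact (natDegree_sub_le _ _).trans (by simpa using hdeg)
  intro k
  induction k with
  | zero => simp
  | succ k ih =>
    rw [Finset.sum_range_succ, ih]
    have h := congrArg (Polynomial.eval (k : ℂ)) hφ
    simp only [eval_sub, eval_comp, eval_add, eval_one, eval_C, eval_X] at h ⊢
    push_cast
    linear_combination -h

/-! ### Power series framework -/

noncomputable def geomPS (μ : ℂ) : PowerSeries ℂ := PowerSeries.mk fun m => μ ^ m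

noncomputable def listPS (l : List ℂ) : PowerSeries ℂ := (l.map geomPS).prod

def IsEPd (S : Finset ℂ) (d : ℕ) (φ : PowerSeries ℂ) : Prop :=
  ∃ (K : ℕ) (p : ℂ → Polynomial ℂ), 1 ≤ K ∧ (∀ μ, (p μ).natDegree ≤ d) ∧
    ∀ k, K ≤ k → (PowerSeries.coeff k) φ = ∑ μ ∈ S, (p μ).eval (k : ℂ) * μ ^ k

lemma coeff_geomPS_mul (μ : ℂ) (φ : PowerSeries ℂ) (k : ℕ) :
    (PowerSeries.coeff k) (geomPS μ * φ) =
      ∑ j ∈ Finset.range (k + 1), μ ^ (k - j) * (PowerSeries.coeff j) φ := by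
  rw [PowerSeries.coeff_mul, Finset.Nat.sum_antidiagonal_eq_sum_range_succ_mk,
    ← Finset.sum_range_reflect (fun j => μ ^ (k - j) * (PowerSeries.coeff j) φ) (k + 1)]
  simp only [geomPS, PowerSeries.coeff_mk]
  refine Finset.sum_congr rfl fun j hj => ?_
  rw [Finset.mem_range] at hj
  have h1 : k + 1 - 1 - j = k - j := by omega
  have h2 : k - (k - j) = j := by omega
  rw [h1, h2]

lemma IsEPd.geom_mul {S : Finset ℂ} {d : ℕ} {φ : PowerSeries ℂ} (μ : ℂ) (hμ : μ ∈ S)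
    (h : IsEPd S d φ) : IsEPd S (d + 1) (geomPS μ * φ) := by
  classical
  obtain ⟨K, p, hK1, hdeg, hp⟩ := h
  by_cases hμ0 : μ = 0
  · have h1 : geomPS (0 : ℂ) = 1 := by
      ext n
      simp only [geomPS, PowerSeries.coeff_mk, PowerSeries.coeff_one]
      rcases n with _ | n <;> simp
    subst hμ0
    rw [h1, one_mul]
    exact ⟨K, p, hK1, fun ν => (hdeg ν).trans (Nat.le_succ d), hp⟩
  have hgs : ∀ μ' : ℂ, μ' ≠ μ → ∃ R : Polynomial ℂ, ∃ C0 : ℂ, R.natDegree ≤ d ∧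
      ∀ k : ℕ, ∑ m ∈ Finset.range k, (μ' / μ) ^ m * (p μ').eval (m : ℂ)
        = (μ' / μ) ^ k * R.eval (k : ℂ) + C0 := by
    intro μ' hne
    have hc : μ' / μ ≠ 1 := fun hh => hne (by field_simp at hh; exact hh)
    obtain ⟨R, C0, hRdeg, hRs⟩ := geom_poly_sum (μ' / μ) hc (p μ')
    exact ⟨R, C0, hRdeg.trans (hdeg μ'), hRs⟩
  choose! R C0 hRdeg hRs using hgs
  obtain ⟨Q, hQdeg, hQ⟩ := poly_sum (p μ)
  set q : ℂ → Polynomial ℂ := fun μ' =>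
    if μ' = μ then Q.comp (Polynomial.X + 1) - Polynomial.C (Q.eval (K : ℂ))
    else Polynomial.C (μ' / μ) * (R μ').comp (Polynomial.X + 1) with hqdef
  set e : ℂ → ℂ := fun μ' =>
    if μ' = μ then 0 else -((μ' / μ) ^ K * (R μ').eval (K : ℂ)) with hedef
  set C1 : ℂ := ∑ j ∈ Finset.range K, (μ ^ j)⁻¹ * (PowerSeries.coeff j) φ with hC1
  have hX1 : ((X : ℂ[X]) + 1).natDegree = 1 := by simpa using natDegree_X_add_C (1 : ℂ)
  refine ⟨K, fun μ' => q μ' + (if μ' = μ then Polynomial.C (C1 + ∑ ν ∈ S, e ν) else 0),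
    hK1, ?_, ?_⟩
  · intro ν
    refine (Polynomial.natDegree_add_le _ _).trans (max_le ?_ ?_)
    · rw [hqdef]; dsimp only; split_ifs
      · refine (natDegree_sub_le _ _).trans (max_le ?_ (by simp))
        refine natDegree_comp_le.trans ?_
        rw [hX1, mul_one]
        refine hQdeg.trans ?_
        have := hdeg μ
        omega
      · refine (natDegree_C_mul_le _ _).trans (natDegree_comp_le.trans ?_)
        rw [hX1, mul_one]
        exact (hRdeg ν ‹_›).trans (Nat.le_succ d)
    · split_ifs
      · exact (natDegree_C _).le.trans (by omega)
      · simp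
  intro k hk
  have hkK : K ≤ k + 1 := by omega
  -- key pointwise identity
  have key : ∀ μ' ∈ S, ∑ j ∈ Finset.Ico K (k + 1), μ ^ (k - j) * ((p μ').eval (j : ℂ) * μ' ^ j)
      = (q μ').eval (k : ℂ) * μ' ^ k + e μ' * μ ^ k := by
    intro μ' _
    by_cases hcase : μ' = μ
    · subst hcase
      have hterm : ∀ j ∈ Finset.Ico K (k + 1),
          μ' ^ (k - j) * ((p μ').eval (j : ℂ) * μ' ^ j) = μ' ^ k * (p μ').eval (j : ℂ) := by
        intro j hj
        rw [Finset.mem_Ico] at hj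
        have hkj : k - j + j = k := by omega
        calc μ' ^ (k - j) * ((p μ').eval (j : ℂ) * μ' ^ j)
            = μ' ^ (k - j + j) * (p μ').eval (j : ℂ) := by rw [pow_add]; ring
          _ = μ' ^ k * (p μ').eval (j : ℂ) := by rw [hkj]
      rw [Finset.sum_congr rfl hterm, ← Finset.mul_sum, Finset.sum_Ico_eq_sub _ hkK, hQ, hQ]
      simp only [hqdef, if_pos rfl, hedef, eval_sub, eval_comp, eval_add, eval_X, eval_one,
        eval_C, if_pos rfl]
      push_cast
      ring
    · have hterm : ∀ j ∈ Finset.Ico K (k + 1),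
          μ ^ (k - j) * ((p μ').eval (j : ℂ) * μ' ^ j)
            = μ ^ k * ((μ' / μ) ^ j * (p μ').eval (j : ℂ)) := by
        intro j hj
        rw [Finset.mem_Ico] at hj
        have hsub : μ ^ (k - j) = μ ^ k * (μ ^ j)⁻¹ := pow_sub₀ μ hμ0 (by omega)
        rw [hsub, div_pow]
        field_simp
      rw [Finset.sum_congr rfl hterm, ← Finset.mul_sum, Finset.sum_Ico_eq_sub _ hkK,
        hRs μ' hcase, hRs μ' hcase]
      have hck : (μ' / μ) ^ k * μ ^ k = μ' ^ k := by
        rw [div_pow, div_mul_cancel₀]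
        exact pow_ne_zero _ hμ0
      simp only [hqdef, if_neg hcase, hedef, if_neg hcase, eval_mul, eval_C, eval_comp,
        eval_add, eval_X, eval_one]
      push_cast
      linear_combination ((μ' / μ) * (R μ').eval ((k : ℂ) + 1)) * hck
  -- assemble
  rw [coeff_geomPS_mul, Finset.range_eq_Ico,
    ← Finset.sum_Ico_consecutive _ (Nat.zero_le K) hkK, ← Finset.range_eq_Ico]
  have hpart1 : ∑ j ∈ Finset.range K, μ ^ (k - j) * (PowerSeries.coeff j) φ
      = C1 * μ ^ k := by
    rw [hC1, Finset.sum_mul]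
    refine Finset.sum_congr rfl fun j hj => ?_
    rw [Finset.mem_range] at hj
    have hsub : μ ^ (k - j) = μ ^ k * (μ ^ j)⁻¹ := pow_sub₀ μ hμ0 (by omega)
    rw [hsub]; ring
  have hpart2 : ∑ j ∈ Finset.Ico K (k + 1), μ ^ (k - j) * (PowerSeries.coeff j) φ
      = ∑ μ' ∈ S, ((q μ').eval (k : ℂ) * μ' ^ k + e μ' * μ ^ k) := by
    have h1 : ∀ j ∈ Finset.Ico K (k + 1), μ ^ (k - j) * (PowerSeries.coeff j) φ
        = ∑ μ' ∈ S, μ ^ (k - j) * ((p μ').eval (j : ℂ) * μ' ^ j) := by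
      intro j hj
      rw [Finset.mem_Ico] at hj
      rw [hp j hj.1, Finset.mul_sum]
    rw [Finset.sum_congr rfl h1, Finset.sum_comm]
    exact Finset.sum_congr rfl key
  have hRHS : ∑ μ' ∈ S,
      (q μ' + if μ' = μ then Polynomial.C (C1 + ∑ ν ∈ S, e ν) else 0).eval (k : ℂ) * μ' ^ k
      = (∑ μ' ∈ S, (q μ').eval (k : ℂ) * μ' ^ k) + (C1 + ∑ ν ∈ S, e ν) * μ ^ k := by
    have h2 : ∀ μ' ∈ S,
        (q μ' + if μ' = μ then Polynomial.C (C1 + ∑ ν ∈ S, e ν) else 0).eval (k : ℂ) * μ' ^ k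
        = (q μ').eval (k : ℂ) * μ' ^ k
          + (if μ' = μ then (C1 + ∑ ν ∈ S, e ν) * μ' ^ k else 0) := by
      intro μ' _
      split_ifs with hcase
      · rw [eval_add, eval_C]; ring
      · rw [eval_add, eval_zero]; ring
    rw [Finset.sum_congr rfl h2, Finset.sum_add_distrib,
      Finset.sum_ite_eq' S μ (fun ν => (C1 + ∑ ν ∈ S, e ν) * ν ^ k), if_pos hμ]
  have hLHS2 : ∑ μ' ∈ S, ((q μ').eval (k : ℂ) * μ' ^ k + e μ' * μ ^ k)
      = (∑ μ' ∈ S, (q μ').eval (k : ℂ) * μ' ^ k) + (∑ ν ∈ S, e ν) * μ ^ k := by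
    rw [Finset.sum_add_distrib, Finset.sum_mul]
  rw [hpart1, hpart2, hLHS2, hRHS]
  ring

lemma isEPd_one (S : Finset ℂ) : IsEPd S 0 1 := by
  refine ⟨1, fun _ => 0, le_rfl, fun μ => by simp, fun k hk => ?_⟩
  rw [PowerSeries.coeff_one, if_neg (by omega)]
  simp

lemma listPS_isEPd (S : Finset ℂ) (l : List ℂ) (hl : ∀ μ ∈ l, μ ∈ S) :
    IsEPd S l.length (listPS l) := by
  induction l with
  | nil => simpa [listPS] using isEPd_one S
  | cons μ l ih =>
    have h1 : listPS (μ :: l) = geomPS μ * listPS l := by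
      simp [listPS]
    rw [h1, List.length_cons]
    exact IsEPd.geom_mul μ (hl μ (by simp)) (ih fun ν hν => hl ν (by simp [hν]))

lemma IsEPd.zero (S : Finset ℂ) (d : ℕ) : IsEPd S d 0 :=
  ⟨1, fun _ => 0, le_rfl, fun μ => by simp, fun k _ => by simp⟩

lemma IsEPd.add {S : Finset ℂ} {d₁ d₂ : ℕ} {φ ψ : PowerSeries ℂ}
    (h₁ : IsEPd S d₁ φ) (h₂ : IsEPd S d₂ ψ) : IsEPd S (max d₁ d₂) (φ + ψ) := by
  obtain ⟨K₁, p₁, hK₁, hd₁, hp₁⟩ := h₁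
  obtain ⟨K₂, p₂, hK₂, hd₂, hp₂⟩ := h₂
  refine ⟨max K₁ K₂, fun μ => p₁ μ + p₂ μ, le_trans hK₁ (le_max_left _ _), fun μ => ?_, ?_⟩
  · exact (natDegree_add_le _ _).trans (max_le_max (hd₁ μ) (hd₂ μ))
  · intro k hk
    rw [map_add, hp₁ k (le_trans (le_max_left _ _) hk), hp₂ k (le_trans (le_max_right _ _) hk),
      ← Finset.sum_add_distrib]
    exact Finset.sum_congr rfl fun μ _ => by rw [eval_add]; ring

lemma IsEPd.smul {S : Finset ℂ} {d : ℕ} {φ : PowerSeries ℂ} (c : ℂ)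
    (h : IsEPd S d φ) : IsEPd S d (c • φ) := by
  obtain ⟨K, p, hK, hd, hp⟩ := h
  refine ⟨K, fun μ => Polynomial.C c * p μ, hK, fun μ => (natDegree_C_mul_le _ _).trans (hd μ),
    fun k hk => ?_⟩
  rw [map_smul, smul_eq_mul, hp k hk, Finset.mul_sum]
  exact Finset.sum_congr rfl fun μ _ => by rw [eval_mul, eval_C]; ring

lemma IsEPd.X_pow_mul {S : Finset ℂ} {d : ℕ} {φ : PowerSeries ℂ} (a : ℕ)
    (h : IsEPd S d φ) : IsEPd S d ((PowerSeries.X : PowerSeries ℂ) ^ a * φ) := by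
  obtain ⟨K, p, hK, hd, hp⟩ := h
  refine ⟨K + a, fun μ => if μ = 0 then 0 else
    Polynomial.C ((μ ^ a)⁻¹) * (p μ).comp (Polynomial.X - Polynomial.C (a : ℂ)), by omega,
    fun μ => ?_, ?_⟩
  · dsimp only
    split_ifs
    · simp
    · refine (natDegree_C_mul_le _ _).trans (natDegree_comp_le.trans ?_)
      rw [natDegree_X_sub_C, mul_one]
      exact hd μ
  · intro k hk
    rw [PowerSeries.coeff_X_pow_mul' φ a k, if_pos (by omega : a ≤ k), hp (k - a) (by omega)]
    refine Finset.sum_congr rfl fun μ _ => ?_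
    dsimp only
    by_cases hμ0 : μ = 0
    · subst hμ0
      rw [if_pos rfl]
      rw [zero_pow (by omega : k - a ≠ 0), zero_pow (by omega : k ≠ 0)]
      simp
    · rw [if_neg hμ0, eval_mul, eval_C, eval_comp, eval_sub, eval_X, eval_C]
      have hcast : ((k - a : ℕ) : ℂ) = (k : ℂ) - (a : ℂ) := by
        push_cast [Nat.cast_sub (by omega : a ≤ k)]
        ring
      have hpow : μ ^ (k - a) = μ ^ k * (μ ^ a)⁻¹ := pow_sub₀ μ hμ0 (by omega)
      rw [hcast, hpow]
      ring

def IsEP (S : Finset ℂ) (φ : PowerSeries ℂ) : Prop := ∃ d, IsEPd S d φ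

def Gens (S : Finset ℂ) : Set (PowerSeries ℂ) :=
  { φ | ∃ (a : ℕ) (l : List ℂ), (∀ μ ∈ l, μ ∈ S) ∧
      φ = (PowerSeries.X : PowerSeries ℂ) ^ a * listPS l }

noncomputable def Nice (S : Finset ℂ) : Submodule ℂ (PowerSeries ℂ) :=
  Submodule.span ℂ (Gens S)

lemma Nice.one {S : Finset ℂ} : (1 : PowerSeries ℂ) ∈ Nice S :=
  Submodule.subset_span ⟨0, [], by simp, by simp [listPS]⟩

lemma Nice.mul {S : Finset ℂ} {φ ψ : PowerSeries ℂ}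
    (hφ : φ ∈ Nice S) (hψ : ψ ∈ Nice S) : φ * ψ ∈ Nice S := by
  induction hφ using Submodule.span_induction with
  | mem x hx =>
    induction hψ using Submodule.span_induction with
    | mem y hy =>
      obtain ⟨a, l, hl, rfl⟩ := hx
      obtain ⟨a', l', hl', rfl⟩ := hy
      refine Submodule.subset_span ⟨a + a', l ++ l', ?_, ?_⟩
      · intro μ hμ
        rcases List.mem_append.mp hμ with h | h
        · exact hl μ h
        · exact hl' μ h
      · simp only [listPS, List.map_append, List.prod_append, pow_add]
        ring
    | zero => rw [mul_zero]; exact Submodule.zero_mem _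
    | add y z _ _ hy hz => rw [mul_add]; exact Submodule.add_mem _ hy hz
    | smul c y _ hy => rw [mul_smul_comm]; exact Submodule.smul_mem _ c hy
  | zero => rw [zero_mul]; exact Submodule.zero_mem _
  | add x y _ _ hx hy => rw [add_mul]; exact Submodule.add_mem _ hx hy
  | smul c x _ hx => rw [smul_mul_assoc]; exact Submodule.smul_mem _ c hx

lemma Nice.isEP {S : Finset ℂ} {φ : PowerSeries ℂ} (h : φ ∈ Nice S) : IsEP S φ := by
  induction h using Submodule.span_induction with
  | mem x hx =>
    obtain ⟨a, l, hl, rfl⟩ := hx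
    exact ⟨l.length, (listPS_isEPd S l hl).X_pow_mul a⟩
  | zero => exact ⟨0, IsEPd.zero S 0⟩
  | add x y _ _ hx hy =>
    obtain ⟨d₁, h₁⟩ := hx
    obtain ⟨d₂, h₂⟩ := hy
    exact ⟨max d₁ d₂, h₁.add h₂⟩
  | smul c x _ hx =>
    obtain ⟨d, h⟩ := hx
    exact ⟨d, h.smul c⟩

lemma rec_mem_nice (S : Finset ℂ) :
    ∀ (n : ℕ) (q : Polynomial ℂ), q.natDegree = n → q.Monic → q.Splits →
      (∀ μ ∈ q.roots, μ ∈ S) →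
      ∀ f : ℕ → ℂ, (∀ k, ∑ i ∈ Finset.range (n + 1), q.coeff i * f (k + i) = 0) →
      PowerSeries.mk f ∈ Nice S := by
  intro n
  induction n with
  | zero =>
    intro q hdeg hmon _ _ f hf
    have hq1 : q = 1 := hmon.natDegree_eq_zero.mp hdeg
    subst hq1
    have hz : ∀ k, f k = 0 := by
      intro k
      have := hf k
      simpa using this
    have : PowerSeries.mk f = 0 := by
      ext k
      simp [hz]
    rw [this]
    exact Submodule.zero_mem _
  | succ n ih =>
    intro q hdeg hmon hsplit hroots f hf
    have hq0 : q ≠ 0 := hmon.ne_zero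
    have hdeg0 : q.degree ≠ 0 := by
      rw [Polynomial.degree_eq_natDegree hq0, hdeg]
      exact_mod_cast (by omega : (n + 1 : ℕ) ≠ 0)
    obtain ⟨μ, hμroot⟩ := hsplit.exists_eval_eq_zero hdeg0
    have hμ : q.IsRoot μ := by simpa using hμroot
    set q' := q /ₘ (X - C μ) with hq'def
    have hfac : (X - C μ) * q' = q := mul_divByMonic_eq_iff_isRoot.mpr hμ
    have hmon' : q'.Monic := (monic_X_sub_C μ).of_mul_monic_left (hfac.symm ▸ hmon)
    have hdeg' : q'.natDegree = n := by
      have h2 := Polynomial.natDegree_mul (X_sub_C_ne_zero μ) hmon'.ne_zero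
      rw [hfac, hdeg, natDegree_X_sub_C] at h2
      omega
    have hsplit' : q'.Splits :=
      ((Polynomial.splits_mul (X_sub_C_ne_zero μ) hmon'.ne_zero).1
        (by rw [hfac]; exact hsplit)).2
    have hroots' : ∀ ν ∈ q'.roots, ν ∈ S := by
      intro ν hν
      refine hroots ν ?_
      rw [← hfac, Polynomial.roots_mul (by rw [hfac]; exact hq0)]
      exact Multiset.mem_add.mpr (Or.inr hν)
    have hμS : μ ∈ S := hroots μ ((Polynomial.mem_roots hq0).mpr hμ)
    set g : ℕ → ℂ := fun k => f (k + 1) - μ * f k with hgdef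
    have hg : ∀ k, ∑ i ∈ Finset.range (n + 1), q'.coeff i * g (k + i) = 0 := by
      intro k
      have h0 := hf k
      have hcoeff : ∀ j, q.coeff j = (X * q').coeff j - μ * q'.coeff j := by
        intro j
        rw [← hfac, sub_mul, coeff_sub, coeff_C_mul]
      have key : ∑ j ∈ Finset.range (n + 2), q.coeff j * f (k + j)
          = (∑ i ∈ Finset.range (n + 1), q'.coeff i * f (k + i + 1))
            - μ * ∑ i ∈ Finset.range (n + 1), q'.coeff i * f (k + i) := by
        rw [Finset.sum_congr rfl fun j (_ : j ∈ Finset.range (n+2)) => by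
          rw [hcoeff j, sub_mul, mul_assoc]]
        rw [Finset.sum_sub_distrib]
        congr 1
        · rw [Finset.sum_range_succ']
          simp only [Polynomial.mul_coeff_zero, coeff_X_zero, zero_mul, add_zero]
          refine Finset.sum_congr rfl fun i _ => ?_
          rw [Polynomial.coeff_X_mul, Nat.add_assoc]
        · rw [Finset.sum_range_succ, coeff_eq_zero_of_natDegree_lt (by omega), Finset.mul_sum]
          simp
      have expand : ∑ i ∈ Finset.range (n + 1), q'.coeff i * g (k + i)
          = (∑ i ∈ Finset.range (n + 1), q'.coeff i * f (k + i + 1))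
            - μ * ∑ i ∈ Finset.range (n + 1), q'.coeff i * f (k + i) := by
        rw [Finset.mul_sum, ← Finset.sum_sub_distrib]
        refine Finset.sum_congr rfl fun i _ => ?_
        simp only [hgdef]
        ring
      rw [expand, ← key, h0]
    have ihg : PowerSeries.mk g ∈ Nice S := ih q' hdeg' hmon' hsplit' hroots' g hg
    -- representation of f
    have hsingle : listPS [μ] = geomPS μ := by simp [listPS]
    have hgen1 : listPS [μ] ∈ Nice S :=
      Submodule.subset_span ⟨0, [μ], by simpa using hμS, by rw [pow_zero, one_mul]⟩
    have hgen2 : (PowerSeries.X : PowerSeries ℂ) * listPS [μ] ∈ Nice S :=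
      Submodule.subset_span ⟨1, [μ], by simpa using hμS, by rw [pow_one]⟩
    set F : ℕ → ℂ := fun k => f 0 * μ ^ k +
      (if 1 ≤ k then ∑ j ∈ Finset.range (k - 1 + 1), μ ^ (k - 1 - j) * g j else 0) with hFdef
    have hFrec : ∀ k, F (k + 1) = μ * F k + g k := by
      intro k
      simp only [hFdef]
      rcases Nat.eq_zero_or_pos k with rfl | hkpos
      · norm_num
        ring
      · rw [if_pos (by omega), if_pos (by omega)]
        have h1 : k + 1 - 1 = k := by omega
        have h4 : k - 1 + 1 = k := by omega
        rw [h1, h4, Finset.sum_range_succ]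
        have h2 : ∑ j ∈ Finset.range k, μ ^ (k - j) * g j
            = μ * ∑ j ∈ Finset.range k, μ ^ (k - 1 - j) * g j := by
          rw [Finset.mul_sum]
          refine Finset.sum_congr rfl fun j hj => ?_
          rw [Finset.mem_range] at hj
          rw [← mul_assoc, ← pow_succ']
          congr 2
          omega
        rw [h2, Nat.sub_self, pow_zero, one_mul]
        ring
    have hfF : ∀ k, f k = F k := by
      intro k
      induction k with
      | zero => simp [hFdef]
      | succ k ihk =>
        rw [hFrec k, ← ihk]
        simp only [hgdef]
        ring
    have hcoeff : ∀ k, (PowerSeries.coeff k) ((PowerSeries.X * listPS [μ]) * PowerSeries.mk g)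
        = (if 1 ≤ k then ∑ j ∈ Finset.range (k - 1 + 1), μ ^ (k - 1 - j) * g j else 0) := by
      intro k
      have hX : (PowerSeries.X * listPS [μ]) * PowerSeries.mk g
          = (PowerSeries.X : PowerSeries ℂ) ^ 1 * (geomPS μ * PowerSeries.mk g) := by
        rw [hsingle, pow_one, mul_assoc]
      rw [hX, PowerSeries.coeff_X_pow_mul']
      split_ifs with h
      · rw [coeff_geomPS_mul]
        simp only [PowerSeries.coeff_mk]
      · rfl
    have hrep : PowerSeries.mk f
        = f 0 • listPS [μ] + (PowerSeries.X * listPS [μ]) * PowerSeries.mk g := by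
      ext k
      rw [map_add, map_smul, hcoeff k, hsingle]
      simp only [geomPS, PowerSeries.coeff_mk, smul_eq_mul]
      rw [hfF k]
    rw [hrep]
    exact Submodule.add_mem _ (Submodule.smul_mem _ _ hgen1) (Nice.mul hgen2 ihg)

lemma coeff_prod_mk : ∀ {t : ℕ} (e : Fin t → ℕ → ℂ) (k : ℕ),
    (PowerSeries.coeff k) (∏ i, PowerSeries.mk (e i))
      = ∑ v ∈ Finset.Nat.antidiagonalTuple t k, ∏ i, e i (v i) := by
  intro t
  induction t with
  | zero =>
    intro e k
    rcases k with _ | k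
    · simp [Finset.Nat.antidiagonalTuple_zero_zero]
    · simp [Finset.Nat.antidiagonalTuple_zero_succ, PowerSeries.coeff_one]
  | succ t ih =>
    intro e k
    rw [Fin.prod_univ_succ, PowerSeries.coeff_mul]
    have lhs_eq : ∑ ab ∈ Finset.HasAntidiagonal.antidiagonal k,
        (PowerSeries.coeff ab.1) (PowerSeries.mk (e 0)) *
          (PowerSeries.coeff ab.2) (∏ i : Fin t, PowerSeries.mk (e i.succ))
        = ∑ ab ∈ Finset.HasAntidiagonal.antidiagonal k, ∑ w ∈ Finset.Nat.antidiagonalTuple t ab.2,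
            e 0 ab.1 * ∏ i, e i.succ (w i) := by
      refine Finset.sum_congr rfl fun ab _ => ?_
      rw [PowerSeries.coeff_mk, ih (fun i => e i.succ) ab.2, Finset.mul_sum]
    rw [lhs_eq, Finset.sum_sigma']
    refine Finset.sum_bij (fun x _ => Fin.cons x.1.1 x.2) ?_ ?_ ?_ ?_
    · rintro ⟨⟨a, b⟩, w⟩ hx
      rw [Finset.mem_sigma] at hx
      obtain ⟨hab, hw⟩ := hx
      rw [Finset.HasAntidiagonal.mem_antidiagonal] at hab
      rw [Finset.Nat.mem_antidiagonalTuple] at hw ⊢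
      rw [Fin.sum_cons, hw, hab]
    · rintro ⟨⟨a, b⟩, w⟩ hx ⟨⟨a', b'⟩, w'⟩ hx' heq
      rw [Finset.mem_sigma] at hx hx'
      have ha : a = a' := by
        have := congrFun heq 0
        simpa using this
      have hw : w = w' := by
        funext i
        have := congrFun heq i.succ
        simpa using this
      have hb : b = b' := by
        have h1 := (Finset.Nat.mem_antidiagonalTuple).mp hx.2
        have h2 := (Finset.Nat.mem_antidiagonalTuple).mp hx'.2
        simp only at h1 h2
        rw [← h1, ← h2, hw]
      subst ha; subst hb; subst hw; rfl
    · intro v hv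
      rw [Finset.Nat.mem_antidiagonalTuple] at hv
      refine ⟨⟨(v 0, ∑ i : Fin t, v i.succ), Fin.tail v⟩, ?_, ?_⟩
      · rw [Finset.mem_sigma]
        constructor
        · rw [Finset.HasAntidiagonal.mem_antidiagonal, ← hv, Fin.sum_univ_succ]
        · rw [Finset.Nat.mem_antidiagonalTuple]
          rfl
      · exact Fin.cons_self_tail v
    · rintro ⟨⟨a, b⟩, w⟩ _
      rw [Fin.prod_univ_succ]
      simp

lemma entry_rec {r : ℕ} (M : Matrix (Fin r) (Fin r) ℂ) (a b : Fin r) (k : ℕ) :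
    ∑ i ∈ Finset.range (M.charpoly.natDegree + 1), M.charpoly.coeff i * (M ^ (k + i)) a b
      = 0 := by
  have hCH : M ^ k * (Polynomial.aeval M) M.charpoly = 0 := by
    rw [Matrix.aeval_self_charpoly, mul_zero]
  have hexp : (Polynomial.aeval M) M.charpoly
      = ∑ i ∈ Finset.range (M.charpoly.natDegree + 1), M.charpoly.coeff i • M ^ i :=
    Polynomial.aeval_eq_sum_range _
  have h2 : M ^ k * (Polynomial.aeval M) M.charpoly
      = ∑ i ∈ Finset.range (M.charpoly.natDegree + 1), M.charpoly.coeff i • M ^ (k + i) := by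
    rw [hexp, Finset.mul_sum]
    refine Finset.sum_congr rfl fun i _ => ?_
    rw [mul_smul_comm, pow_add]
  have h3 := congrArg (fun N : Matrix (Fin r) (Fin r) ℂ => N a b) (h2.symm.trans hCH)
  simpa [Matrix.sum_apply, Matrix.smul_apply, smul_eq_mul] using h3

lemma charpoly_conj {r : ℕ} (P N : Matrix (Fin r) (Fin r) ℂ) (hP : IsUnit P.det) :
    (P * N * P⁻¹).charpoly = N.charpoly := by
  have h1 : P * P⁻¹ = 1 := Matrix.mul_nonsing_inv P hP
  have hPc : (Polynomial.C (R := ℂ)).mapMatrix P * (Polynomial.C (R := ℂ)).mapMatrix P⁻¹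
      = 1 := by
    rw [← map_mul, h1, map_one]
  have hch : (P * N * P⁻¹).charmatrix
      = (Polynomial.C (R := ℂ)).mapMatrix P * N.charmatrix *
          (Polynomial.C (R := ℂ)).mapMatrix P⁻¹ := by
    unfold Matrix.charmatrix
    rw [mul_sub, sub_mul]
    congr 1
    · have hcomm := (Matrix.scalar_commute (X : ℂ[X])
        (fun r' => Commute.all _ r') ((Polynomial.C (R := ℂ)).mapMatrix P)).symm
      rw [hcomm.eq, mul_assoc, hPc, mul_one]
    · rw [map_mul, map_mul]
  rw [Matrix.charpoly, Matrix.charpoly, hch, Matrix.det_mul, Matrix.det_mul]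
  have hdet : ((Polynomial.C (R := ℂ)).mapMatrix P).det *
      ((Polynomial.C (R := ℂ)).mapMatrix P⁻¹).det = 1 := by
    rw [← Matrix.det_mul, hPc, Matrix.det_one]
  calc ((Polynomial.C (R := ℂ)).mapMatrix P).det * N.charmatrix.det *
        ((Polynomial.C (R := ℂ)).mapMatrix P⁻¹).det
      = N.charmatrix.det * (((Polynomial.C (R := ℂ)).mapMatrix P).det *
          ((Polynomial.C (R := ℂ)).mapMatrix P⁻¹).det) := by ring
    _ = N.charmatrix.det := by rw [hdet, mul_one]

end MatrixEntrySumAux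

open MatrixEntrySumAux Polynomial in
/-- There are `K ≥ 0` and polynomials `p_ν`, one for each eigenvalue `ν` of `M`
(the roots of its characteristic polynomial), such that for all `k ≥ K`,
`walkSum M t b k = Σ_{ν ∈ Spec(M)} ν^k p_ν(k)`.  Moreover, if `M` is diagonalizable,
the polynomials `p_ν` can be taken of degree at most `t`. -/
theorem matrix_entry_sum (r t : ℕ) (ht : 0 < t) (M : Matrix (Fin r) (Fin r) ℂ)
    (b : Fin t → Fin r × Fin r) :
    ∃ (K : ℕ) (p : ℂ → Polynomial ℂ),
      (M.Diagonalizable → ∀ ν : ℂ, (p ν).natDegree ≤ t) ∧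
      ∀ k : ℕ, K ≤ k →
        walkSum M t b k
          = ∑ ν ∈ M.charpoly.roots.toFinset, (p ν).eval (k : ℂ) * ν ^ k := by
  classical
  set S : Finset ℂ := M.charpoly.roots.toFinset with hSdef
  by_cases hdiag : M.Diagonalizable
  · -- diagonalizable case, with degree bound
    obtain ⟨P, D, hP, hD, hM⟩ := hdiag
    set dg : Fin r → ℂ := fun j => D j j with hdg
    have hDdiag : D = Matrix.diagonal dg := (Matrix.IsDiag.diagonal_diag hD).symm
    have hPP : P * P⁻¹ = 1 := Matrix.mul_nonsing_inv P hP
    have hPP' : P⁻¹ * P = 1 := Matrix.nonsing_inv_mul P hP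
    have hMk : ∀ m : ℕ, M ^ m = P * Matrix.diagonal (fun j => dg j ^ m) * P⁻¹ := by
      intro m
      induction m with
      | zero =>
        simp only [pow_zero]
        rw [Matrix.diagonal_one, Matrix.mul_one, hPP]
      | succ m ihm =>
        rw [pow_succ, ihm, hM, hDdiag]
        calc P * Matrix.diagonal (fun j => dg j ^ m) * P⁻¹ * (P * Matrix.diagonal dg * P⁻¹)
            = P * (Matrix.diagonal (fun j => dg j ^ m) * (P⁻¹ * P) * Matrix.diagonal dg) * P⁻¹ := by
              simp only [Matrix.mul_assoc]
          _ = P * (Matrix.diagonal (fun j => dg j ^ m) * Matrix.diagonal dg) * P⁻¹ := by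
              rw [hPP', Matrix.mul_one]
          _ = P * Matrix.diagonal (fun j => dg j ^ (m + 1)) * P⁻¹ := by
              rw [Matrix.diagonal_mul_diagonal]
              simp [pow_succ]
    set c : Fin t → Fin r → ℂ := fun i j => P (b i).1 j * P⁻¹ j (b i).2 with hc
    have hentry : ∀ (i : Fin t) (m : ℕ),
        (M ^ m) (b i).1 (b i).2 = ∑ j, c i j * dg j ^ m := by
      intro i m
      rw [hMk m, Matrix.mul_apply]
      refine Finset.sum_congr rfl fun j _ => ?_
      rw [Matrix.mul_diagonal, hc]
      ring
    -- eigenvalues of the diagonal are the roots of the charpoly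
    have hdS : ∀ j, dg j ∈ S := by
      have hcp : M.charpoly = (Matrix.diagonal dg).charpoly := by
        rw [hM, hDdiag]
        exact charpoly_conj P (Matrix.diagonal dg) hP
      intro j
      rw [hSdef, Multiset.mem_toFinset, hcp]
      have hupper : (Matrix.diagonal dg).charpoly = ∏ i, (X - C (dg i)) := by
        rw [Matrix.charpoly_of_upperTriangular _ (Matrix.blockTriangular_diagonal dg)]
        exact Finset.prod_congr rfl fun i _ => by rw [Matrix.diagonal_apply_eq]
      have hms : (∏ i, (X - C (dg i)))
          = ((Finset.univ.val.map dg).map fun a => X - C a).prod := by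
        rw [Finset.prod_eq_multiset_prod, Multiset.map_map]
        rfl
      rw [hupper, hms, Polynomial.roots_multiset_prod_X_sub_C]
      exact Multiset.mem_map_of_mem dg (Finset.mem_univ_val j)
    -- rewrite walkSum via power series coefficients
    have hws : ∀ k : ℕ, walkSum M t b k = ∑ g : Fin t → Fin r,
        (∏ i, c i (g i)) *
          (PowerSeries.coeff k) (listPS (List.ofFn fun i => dg (g i))) := by
      intro k
      have hlist : ∀ g : Fin t → Fin r,
          listPS (List.ofFn fun i => dg (g i))
            = ∏ i, PowerSeries.mk fun m => dg (g i) ^ m := by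
        intro g
        rw [listPS, List.map_ofFn, List.prod_ofFn]
        rfl
      calc walkSum M t b k
          = ∑ v ∈ Finset.Nat.antidiagonalTuple t k, ∏ i, ∑ j, c i j * dg j ^ v i := by
            rw [walkSum]
            exact Finset.sum_congr rfl fun v _ =>
              Finset.prod_congr rfl fun i _ => hentry i (v i)
        _ = ∑ v ∈ Finset.Nat.antidiagonalTuple t k, ∑ g : Fin t → Fin r,
              ∏ i, (c i (g i) * dg (g i) ^ v i) := by
            refine Finset.sum_congr rfl fun v _ => ?_
            rw [← Fintype.piFinset_univ, Finset.prod_univ_sum]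
        _ = ∑ g : Fin t → Fin r, ∑ v ∈ Finset.Nat.antidiagonalTuple t k,
              ∏ i, (c i (g i) * dg (g i) ^ v i) := Finset.sum_comm
        _ = ∑ g : Fin t → Fin r,
              (∏ i, c i (g i)) *
                (PowerSeries.coeff k) (listPS (List.ofFn fun i => dg (g i))) := by
            refine Finset.sum_congr rfl fun g _ => ?_
            rw [hlist g, coeff_prod_mk, Finset.mul_sum]
            refine Finset.sum_congr rfl fun v _ => ?_
            rw [Finset.prod_mul_distrib]
    -- apply the list lemma
    have hEx : ∀ g : Fin t → Fin r, ∃ (K : ℕ) (p : ℂ → Polynomial ℂ), 1 ≤ K ∧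
        (∀ μ, (p μ).natDegree ≤ t) ∧ ∀ k, K ≤ k →
          (PowerSeries.coeff k) (listPS (List.ofFn fun i => dg (g i)))
            = ∑ μ ∈ S, (p μ).eval (k : ℂ) * μ ^ k := by
      intro g
      have h := listPS_isEPd S (List.ofFn fun i => dg (g i)) ?_
      · rwa [List.length_ofFn] at h
      · intro μ hμ
        rw [List.mem_ofFn] at hμ
        obtain ⟨i, rfl⟩ := hμ
        exact hdS _
    choose Kg pg hKg1 hdegg hpg using hEx
    refine ⟨Finset.univ.sup Kg,
      fun μ => ∑ g : Fin t → Fin r, Polynomial.C (∏ i, c i (g i)) * pg g μ,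
      fun _ ν => ?_, fun k hk => ?_⟩
    · exact Polynomial.natDegree_sum_le_of_forall_le _ _ fun g _ =>
        (natDegree_C_mul_le _ _).trans (hdegg g ν)
    · rw [hws k]
      have hcongr : ∀ g : Fin t → Fin r, g ∈ (Finset.univ : Finset (Fin t → Fin r)) →
          (∏ i, c i (g i)) *
              (PowerSeries.coeff k) (listPS (List.ofFn fun i => dg (g i)))
            = ∑ μ ∈ S, (∏ i, c i (g i)) * ((pg g μ).eval (k : ℂ) * μ ^ k) := by
        intro g _
        rw [hpg g k (le_trans (Finset.le_sup (Finset.mem_univ g)) hk), Finset.mul_sum]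
      rw [Finset.sum_congr rfl hcongr, Finset.sum_comm]
      refine Finset.sum_congr rfl fun μ _ => ?_
      rw [Polynomial.eval_finset_sum, Finset.sum_mul]
      refine Finset.sum_congr rfl fun g _ => ?_
      rw [eval_mul, eval_C]
      ring
  · -- general case via linear recurrences
    set e : Fin t → ℕ → ℂ := fun i m => (M ^ m) (b i).1 (b i).2 with he
    have hNice : (∏ i, PowerSeries.mk (e i)) ∈ Nice S := by
      refine Finset.prod_induction _ (· ∈ Nice S) (fun _ _ => Nice.mul) Nice.one ?_
      intro i _
      refine rec_mem_nice S M.charpoly.natDegree M.charpoly rfl M.charpoly_monic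
        (IsAlgClosed.splits _) (fun μ hμ => Multiset.mem_toFinset.mpr hμ)
        (e i) (fun k => entry_rec M _ _ k)
    obtain ⟨d, K, p, hK1, hdeg, hp⟩ := Nice.isEP hNice
    refine ⟨K, p, fun h => absurd h hdiag, fun k hk => ?_⟩
    have h1 : walkSum M t b k = (PowerSeries.coeff k) (∏ i, PowerSeries.mk (e i)) :=
      (coeff_prod_mk e k).symm
    rw [h1, hp k hk]
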